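/- Bound on the gap between joint and individual surrogate objectives: |𝓛^joint_{π_old}(π_new) − 𝓛ⁱ_{π_old}(πⁱ_new)| ≤ (2M/(1−γ)) · √(Σ_{j≠i} max_s D_KL(πʲ_old(·|s) ‖ πʲ_new(·|s))), where M = max_{s,a} |A_old(s,a)|. -/

import Mathlib

/-- KL divergence of probability mass functions on a finite set, with convention 0·log 0 = 0. -/
noncomputable def klDiv {A : Type*} [Fintype A] (p q : A → ℝ) : ℝ :=
  ∑ a, if p a = 0 then 0 else p a * Real.log (p a / q a)

lemma hellinger_le_klDiv {A : Type*} [Fintype A] (p q : A → ℝ)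
    (hp0 : ∀ a, 0 ≤ p a) (hq0 : ∀ a, 0 ≤ q a)
    (hp1 : ∑ a, p a = 1) (hq1 : ∑ a, q a = 1)
    (hpos : ∀ a, 0 < p a → 0 < q a) :
    ∑ a, (Real.sqrt (p a) - Real.sqrt (q a)) ^ 2 ≤ klDiv p q := by
  have hkl : klDiv p q
      = ∑ a, ((if p a = 0 then 0 else p a * Real.log (p a / q a)) - p a + q a) := by
    simp [klDiv, Finset.sum_add_distrib, Finset.sum_sub_distrib, hp1, hq1]
  rw [hkl]
  apply Finset.sum_le_sum
  intro a _
  by_cases h : p a = 0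
  · simp [h, Real.sqrt_eq_zero', Real.sq_sqrt (hq0 a)]
  · have hpa : 0 < p a := lt_of_le_of_ne (hp0 a) (Ne.symm h)
    have hqa : 0 < q a := hpos a hpa
    simp only [h, if_false]
    set x := Real.sqrt (p a) with hx
    set y := Real.sqrt (q a) with hy
    have hx0 : 0 < x := Real.sqrt_pos.2 hpa
    have hy0 : 0 < y := Real.sqrt_pos.2 hqa
    have hx2 : x ^ 2 = p a := Real.sq_sqrt (hp0 a)
    have hy2 : y ^ 2 = q a := Real.sq_sqrt (hq0 a)
    have hdiv : Real.sqrt (p a / q a) = x / y := Real.sqrt_div (hp0 a) _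
    have hlog : Real.log (p a / q a) = 2 * Real.log (Real.sqrt (p a / q a)) := by
      rw [Real.log_sqrt (by positivity)]; ring
    have h2 : 1 - (x / y)⁻¹ ≤ Real.log (x / y) :=
      Real.one_sub_inv_le_log_of_pos (by positivity)
    have h3 : Real.log (p a / q a) ≥ 2 * (1 - y / x) := by
      rw [hlog, hdiv]
      have : (x / y)⁻¹ = y / x := by field_simp
      nlinarith [h2]
    have h4 : p a * Real.log (p a / q a) ≥ p a * (2 * (1 - y / x)) :=
      mul_le_mul_of_nonneg_left h3 (le_of_lt hpa)
    have h5 : p a * (2 * (1 - y / x)) = 2 * x ^ 2 - 2 * x * y := by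
      rw [← hx2]; field_simp
    nlinarith [h4, h5, hx2, hy2]

lemma pinsker4 {A : Type*} [Fintype A] (p q : A → ℝ)
    (hp0 : ∀ a, 0 ≤ p a) (hq0 : ∀ a, 0 ≤ q a)
    (hp1 : ∑ a, p a = 1) (hq1 : ∑ a, q a = 1)
    (hpos : ∀ a, 0 < p a → 0 < q a) :
    ∑ a, |p a - q a| ≤ 2 * Real.sqrt (klDiv p q) := by
  have hhel := hellinger_le_klDiv p q hp0 hq0 hp1 hq1 hpos
  have hkl0 : 0 ≤ klDiv p q :=
    le_trans (Finset.sum_nonneg fun a _ => sq_nonneg _) hhel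
  set f : A → ℝ := fun a => |Real.sqrt (p a) - Real.sqrt (q a)|
  set g : A → ℝ := fun a => Real.sqrt (p a) + Real.sqrt (q a)
  have hfg : ∀ a, |p a - q a| = f a * g a := by
    intro a
    have hx2 : Real.sqrt (p a) ^ 2 = p a := Real.sq_sqrt (hp0 a)
    have hy2 : Real.sqrt (q a) ^ 2 = q a := Real.sq_sqrt (hq0 a)
    have hg0 : 0 ≤ g a := by positivity
    have key : p a - q a = (Real.sqrt (p a) - Real.sqrt (q a)) * g a := by
      simp only [g]; linear_combination hy2 - hx2
    rw [key, abs_mul, abs_of_nonneg hg0]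
  have hf2 : ∑ a, f a ^ 2 ≤ klDiv p q := by
    simpa [f, sq_abs] using hhel
  have hg2 : ∑ a, g a ^ 2 ≤ 4 := by
    have : ∀ a, g a ^ 2 ≤ 2 * p a + 2 * q a := by
      intro a
      have hx2 : Real.sqrt (p a) ^ 2 = p a := Real.sq_sqrt (hp0 a)
      have hy2 : Real.sqrt (q a) ^ 2 = q a := Real.sq_sqrt (hq0 a)
      have := sq_nonneg (Real.sqrt (p a) - Real.sqrt (q a))
      simp only [g]; nlinarith
    calc ∑ a, g a ^ 2 ≤ ∑ a, (2 * p a + 2 * q a) := Finset.sum_le_sum fun a _ => this a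
      _ = 4 := by rw [Finset.sum_add_distrib, ← Finset.mul_sum, ← Finset.mul_sum, hp1, hq1]; norm_num
  have hcs : (∑ a, f a * g a) ^ 2 ≤ (∑ a, f a ^ 2) * ∑ a, g a ^ 2 :=
    Finset.sum_mul_sq_le_sq_mul_sq _ _ _
  have hsum0 : 0 ≤ ∑ a, |p a - q a| := Finset.sum_nonneg fun a _ => abs_nonneg _
  rw [show (2 : ℝ) * Real.sqrt (klDiv p q) = Real.sqrt (4 * klDiv p q) by
    rw [Real.sqrt_mul (by norm_num), show Real.sqrt 4 = 2 by
      rw [show (4:ℝ) = 2 ^ 2 by norm_num, Real.sqrt_sq (by norm_num)]]]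
  rw [show (∑ a, |p a - q a|) = ∑ a, f a * g a from Finset.sum_congr rfl fun a _ => hfg a]
  have hsum0' : 0 ≤ ∑ a, f a * g a := by
    rw [show (∑ a, f a * g a) = ∑ a, |p a - q a| from
      (Finset.sum_congr rfl fun a _ => (hfg a).symm)]
    exact hsum0
  rw [Real.le_sqrt hsum0' (by positivity)]
  calc (∑ a, f a * g a) ^ 2 ≤ (∑ a, f a ^ 2) * ∑ a, g a ^ 2 := hcs
    _ ≤ 4 * klDiv p q := by nlinarith [Finset.sum_nonneg (fun a (_ : a ∈ Finset.univ) => sq_nonneg (f a))]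

lemma klDiv_pi {J : Type*} [Fintype J] [DecidableEq J] (A : J → Type*) [∀ j, Fintype (A j)]
    (p q : ∀ j, A j → ℝ) (hp0 : ∀ j a, 0 ≤ p j a) (hp1 : ∀ j, ∑ a, p j a = 1)
    (hpos : ∀ j a, 0 < p j a → 0 < q j a) :
    klDiv (fun b : ∀ j, A j => ∏ j, p j (b j)) (fun b => ∏ j, q j (b j))
      = ∑ j, klDiv (p j) (q j) := by
  unfold klDiv
  have step1 : ∀ b : ∀ j, A j,
      (if (∏ j, p j (b j)) = 0 then 0
        else (∏ j, p j (b j)) * Real.log ((∏ j, p j (b j)) / ∏ j, q j (b j)))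
      = ∑ j, (∏ k, p k (b k)) * Real.log (p j (b j) / q j (b j)) := by
    intro b
    by_cases hb : (∏ j, p j (b j)) = 0
    · simp [hb]
    · have hpk : ∀ k, 0 < p k (b k) := fun k =>
        lt_of_le_of_ne (hp0 k (b k))
          (Ne.symm (Finset.prod_ne_zero_iff.mp hb k (Finset.mem_univ k)))
      have hqk : ∀ k, 0 < q k (b k) := fun k => hpos k (b k) (hpk k)
      have hqprod : (0:ℝ) < ∏ j, q j (b j) := Finset.prod_pos fun k _ => hqk k
      have hlog : Real.log ((∏ j, p j (b j)) / ∏ j, q j (b j))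
          = ∑ j, Real.log (p j (b j) / q j (b j)) := by
        rw [Real.log_div hb (ne_of_gt hqprod),
          Real.log_prod (fun k _ => ne_of_gt (hpk k)),
          Real.log_prod (fun k _ => ne_of_gt (hqk k)),
          ← Finset.sum_sub_distrib]
        exact Finset.sum_congr rfl fun k _ =>
          (Real.log_div (ne_of_gt (hpk k)) (ne_of_gt (hqk k))).symm
      rw [if_neg hb, hlog, Finset.mul_sum]
  rw [Finset.sum_congr rfl fun b _ => step1 b, Finset.sum_comm]
  apply Finset.sum_congr rfl
  intro j _
  have hprod : ∀ b : ∀ k, A k,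
      (∏ k, p k (b k)) * Real.log (p j (b j) / q j (b j))
      = ∏ k, (p k (b k) * (if k = j then Real.log (p k (b k) / q k (b k)) else 1)) := by
    intro b
    rw [Finset.prod_mul_distrib]
    congr 1
    simp
  rw [Finset.sum_congr rfl fun b _ => hprod b,
    ← Fintype.prod_sum (fun k a => p k a * (if k = j then Real.log (p k a / q k a) else 1))]
  rw [Finset.prod_eq_single j (fun k _ hk => by simp [hk, hp1 k]) (by simp)]
  simp only [if_pos rfl]
  apply Finset.sum_congr rfl
  intro a _
  by_cases h : p j a = 0 <;> simp [h]

/-- bound on the gap between the joint and individual surrogate objectives.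
Agent `i` has action space `Ai`; the other agents are indexed by `J` with action spaces `A j`. -/
theorem surrogate_gap_bound
    {S Ai : Type*} [Fintype S] [Nonempty S] [Fintype Ai]
    {J : Type*} [Fintype J] [DecidableEq J] (A : J → Type*) [∀ j, Fintype (A j)]
    (γ M : ℝ) (hγ0 : 0 ≤ γ) (hγ1 : γ < 1) (hM0 : 0 ≤ M)
    -- discounted state distribution of the old joint policy
    (ρ : S → ℝ) (hρ0 : ∀ s, 0 ≤ ρ s) (hρ1 : ∑ s, ρ s = 1 / (1 - γ))
    -- advantage of the old joint policy, with M = max |A_old|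
    (Adv : S → Ai → (∀ j, A j) → ℝ) (hAdv : ∀ s ai b, |Adv s ai b| ≤ M)
    -- agent i's new policy
    (πinew : S → Ai → ℝ) (hi0 : ∀ s ai, 0 ≤ πinew s ai) (hi1 : ∀ s, ∑ ai, πinew s ai = 1)
    -- the other agents' old and new policies
    (pold pnew : ∀ j, S → A j → ℝ)
    (hpo0 : ∀ j s a, 0 ≤ pold j s a) (hpo1 : ∀ j s, ∑ a, pold j s a = 1)
    (hpn0 : ∀ j s a, 0 ≤ pnew j s a) (hpn1 : ∀ j s, ∑ a, pnew j s a = 1)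
    (hpos : ∀ j s a, 0 < pold j s a → 0 < pnew j s a) :
    |(∑ s, ρ s * ∑ ai, ∑ b : ∀ j, A j, (πinew s ai * ∏ j, pnew j s (b j)) * Adv s ai b)
        - ∑ s, ρ s * ∑ ai, πinew s ai * ∑ b : ∀ j, A j, (∏ j, pold j s (b j)) * Adv s ai b|
      ≤ (2 * M / (1 - γ)) * Real.sqrt (∑ j, ⨆ s : S, klDiv (pold j s) (pnew j s)) := by
  set T : ℝ := ∑ j, ⨆ s : S, klDiv (pold j s) (pnew j s) with hT
  have hsqT : 0 ≤ Real.sqrt T := Real.sqrt_nonneg _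
  -- per-state bound
  have key : ∀ s : S,
      |∑ ai, πinew s ai *
        ∑ b : ∀ j, A j, ((∏ j, pnew j s (b j)) - ∏ j, pold j s (b j)) * Adv s ai b|
      ≤ 2 * M * Real.sqrt T := by
    intro s
    set P : (∀ j, A j) → ℝ := fun b => ∏ j, pold j s (b j) with hP
    set Q : (∀ j, A j) → ℝ := fun b => ∏ j, pnew j s (b j) with hQ
    have hP0 : ∀ b, 0 ≤ P b := fun b => Finset.prod_nonneg fun j _ => hpo0 j s (b j)
    have hQ0 : ∀ b, 0 ≤ Q b := fun b => Finset.prod_nonneg fun j _ => hpn0 j s (b j)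
    have hP1 : ∑ b, P b = 1 := by
      rw [hP, ← Fintype.prod_sum (fun j a => pold j s a)]
      simp [hpo1]
    have hQ1 : ∑ b, Q b = 1 := by
      rw [hQ, ← Fintype.prod_sum (fun j a => pnew j s a)]
      simp [hpn1]
    have hPQ : ∀ b, 0 < P b → 0 < Q b := by
      intro b hb
      apply Finset.prod_pos
      intro j _
      exact hpos j s (b j) (lt_of_le_of_ne (hpo0 j s (b j))
        (Ne.symm (Finset.prod_ne_zero_iff.mp (ne_of_gt hb) j (Finset.mem_univ j))))
    have hpin := pinsker4 P Q hP0 hQ0 hP1 hQ1 hPQ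
    have hklprod : klDiv P Q = ∑ j, klDiv (pold j s) (pnew j s) :=
      klDiv_pi A (fun j => pold j s) (fun j => pnew j s)
        (fun j a => hpo0 j s a) (fun j => hpo1 j s) (fun j a => hpos j s a)
    have hklT : klDiv P Q ≤ T := by
      rw [hklprod, hT]
      apply Finset.sum_le_sum
      intro j _
      exact le_ciSup (f := fun s : S => klDiv (pold j s) (pnew j s)) (Set.Finite.bddAbove (Set.finite_range _)) s
    have hTV : ∑ b, |Q b - P b| ≤ 2 * Real.sqrt T := by
      calc ∑ b, |Q b - P b| = ∑ b, |P b - Q b| := by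
            exact Finset.sum_congr rfl fun b _ => abs_sub_comm _ _
        _ ≤ 2 * Real.sqrt (klDiv P Q) := hpin
        _ ≤ 2 * Real.sqrt T := by
            have := Real.sqrt_le_sqrt hklT
            linarith
    have hin : ∀ ai, |∑ b : ∀ j, A j, (Q b - P b) * Adv s ai b|
        ≤ M * (2 * Real.sqrt T) := by
      intro ai
      calc |∑ b : ∀ j, A j, (Q b - P b) * Adv s ai b|
          ≤ ∑ b : ∀ j, A j, |(Q b - P b) * Adv s ai b| := Finset.abs_sum_le_sum_abs _ _
        _ ≤ ∑ b : ∀ j, A j, |Q b - P b| * M := by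
            apply Finset.sum_le_sum
            intro b _
            rw [abs_mul]
            exact mul_le_mul_of_nonneg_left (hAdv s ai b) (abs_nonneg _)
        _ = (∑ b, |Q b - P b|) * M := by rw [Finset.sum_mul]
        _ ≤ (2 * Real.sqrt T) * M :=
            mul_le_mul_of_nonneg_right hTV hM0
        _ = M * (2 * Real.sqrt T) := by ring
    calc |∑ ai, πinew s ai *
          ∑ b : ∀ j, A j, ((∏ j, pnew j s (b j)) - ∏ j, pold j s (b j)) * Adv s ai b|
        ≤ ∑ ai, |πinew s ai *
          ∑ b : ∀ j, A j, ((∏ j, pnew j s (b j)) - ∏ j, pold j s (b j)) * Adv s ai b| :=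
          Finset.abs_sum_le_sum_abs _ _
      _ ≤ ∑ ai, πinew s ai * (M * (2 * Real.sqrt T)) := by
          apply Finset.sum_le_sum
          intro ai _
          rw [abs_mul, abs_of_nonneg (hi0 s ai)]
          exact mul_le_mul_of_nonneg_left (hin ai) (hi0 s ai)
      _ = (∑ ai, πinew s ai) * (M * (2 * Real.sqrt T)) := by rw [Finset.sum_mul]
      _ = 2 * M * Real.sqrt T := by rw [hi1 s]; ring
  -- rewrite the global difference as a single sum
  have hrw : (∑ s, ρ s * ∑ ai, ∑ b : ∀ j, A j, (πinew s ai * ∏ j, pnew j s (b j)) * Adv s ai b)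
      - ∑ s, ρ s * ∑ ai, πinew s ai * ∑ b : ∀ j, A j, (∏ j, pold j s (b j)) * Adv s ai b
      = ∑ s, ρ s * ∑ ai, πinew s ai *
          ∑ b : ∀ j, A j, ((∏ j, pnew j s (b j)) - ∏ j, pold j s (b j)) * Adv s ai b := by
    rw [← Finset.sum_sub_distrib]
    apply Finset.sum_congr rfl
    intro s _
    rw [← mul_sub]
    congr 1
    rw [← Finset.sum_sub_distrib]
    apply Finset.sum_congr rfl
    intro ai _
    rw [Finset.mul_sum, Finset.mul_sum, ← Finset.sum_sub_distrib]
    apply Finset.sum_congr rfl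
    intro b _
    ring
  rw [hrw]
  have hγ' : 0 < 1 - γ := by linarith
  calc |∑ s, ρ s * ∑ ai, πinew s ai *
        ∑ b : ∀ j, A j, ((∏ j, pnew j s (b j)) - ∏ j, pold j s (b j)) * Adv s ai b|
      ≤ ∑ s, |ρ s * ∑ ai, πinew s ai *
        ∑ b : ∀ j, A j, ((∏ j, pnew j s (b j)) - ∏ j, pold j s (b j)) * Adv s ai b| :=
        Finset.abs_sum_le_sum_abs _ _
    _ ≤ ∑ s, ρ s * (2 * M * Real.sqrt T) := by
        apply Finset.sum_le_sum
        intro s _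
        rw [abs_mul, abs_of_nonneg (hρ0 s)]
        exact mul_le_mul_of_nonneg_left (key s) (hρ0 s)
    _ = (∑ s, ρ s) * (2 * M * Real.sqrt T) := by rw [Finset.sum_mul]
    _ = (2 * M / (1 - γ)) * Real.sqrt T := by rw [hρ1]; field_simp
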